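/- MWSD implies MSD but not conversely: for any d⁻, d⁺ ∈ [0,1], if X ⪰_{d⁻}^{d⁺} Y then X ⪰ Y; moreover there exist discrete random variables X, Y on a two-point equiprobable state space and parameters d⁻ = d⁺ = 0 such that X ⪰ Y but not X ⪰_{0}^{0} Y (since d⁻ = d⁺ = 0 forces FSD on essentially the whole support interval, which MSD alone does not imply). -/

import Mathlib

open MeasureTheory

/-- The CDF of a discrete random variable with values `x` and probabilities `p`. -/
noncomputable def cdf19 (n : ℕ) (p x : Fin n → ℝ) (t : ℝ) : ℝ :=
  ∑ i ∈ Finset.univ.filter (fun i => x i ≤ t), p i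

/-- MSD relation (Proposition 1). -/
noncomputable def MSD19 (n : ℕ) (p : Fin n → ℝ) (a b r : ℝ) (x y : Fin n → ℝ) : Prop :=
  (∀ t ∈ Set.Icc r b, 0 ≤ ∫ τ in t..b, (cdf19 n p y τ - cdf19 n p x τ)) ∧
  (∀ t ∈ Set.Icc a r, 0 ≤ ∫ τ in a..t, (cdf19 n p y τ - cdf19 n p x τ))

/-- t_d⁻ = sup({a} ∪ {t ≤ r | F_X(t) ≤ d⁻, F_Y(t) ≤ d⁻}). -/
noncomputable def tdm19 (n : ℕ) (p x y : Fin n → ℝ) (a r d : ℝ) : ℝ :=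
  sSup ({a} ∪ {t : ℝ | t ≤ r ∧ cdf19 n p x t ≤ d ∧ cdf19 n p y t ≤ d})

/-- t_d⁺ = inf({b} ∪ {t ≥ r | F_X(t) ≥ 1-d⁺, F_Y(t) ≥ 1-d⁺}). -/
noncomputable def tdp19 (n : ℕ) (p x y : Fin n → ℝ) (b r d : ℝ) : ℝ :=
  sInf ({b} ∪ {t : ℝ | r ≤ t ∧ 1 - d ≤ cdf19 n p x t ∧ 1 - d ≤ cdf19 n p y t})

/-- MWSD with thresholds (d⁻, d⁺) (Proposition 2): MSD together with FSD on
[t_d⁻, t_d⁺). -/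
noncomputable def MWSD19 (n : ℕ) (p : Fin n → ℝ) (a b r : ℝ) (x y : Fin n → ℝ)
    (dm dp : ℝ) : Prop :=
  MSD19 n p a b r x y ∧
  ∀ t ∈ Set.Ico (tdm19 n p x y a r dm) (tdp19 n p x y b r dp),
    cdf19 n p x t ≤ cdf19 n p y t


lemma step_mono (c : ℝ) : Monotone (fun τ : ℝ => if c ≤ τ then (1:ℝ) else 0) := by
  intro a b hab
  dsimp only; split <;> split <;> first
  | (rename_i h1 h2; exact absurd (le_trans h1 hab) h2)
  | norm_num

lemma step_ii (c t u : ℝ) :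
    IntervalIntegrable (fun τ : ℝ => if c ≤ τ then (1:ℝ) else 0) volume t u :=
  (step_mono c).intervalIntegrable

lemma step_int (c t u : ℝ) (ht : t ≤ u) :
    ∫ τ in t..u, (if c ≤ τ then (1:ℝ) else 0) = u - max t (min c u) := by
  have hfun : (fun τ : ℝ => if c ≤ τ then (1:ℝ) else 0)
      = Set.indicator (Set.Ici c) (fun _ => (1:ℝ)) := by
    funext τ; simp [Set.indicator_apply]
  rw [intervalIntegral.integral_of_le ht, hfun,
    MeasureTheory.integral_indicator measurableSet_Ici]
  rw [MeasureTheory.setIntegral_const, Measure.real, Measure.restrict_apply measurableSet_Ici]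
  rcases le_or_gt c t with h1 | h1
  · have : Set.Ici c ∩ Set.Ioc t u = Set.Ioc t u := by
      apply Set.inter_eq_self_of_subset_right
      intro τ hτ; exact le_trans h1 hτ.1.le
    rw [this, Real.volume_Ioc, ENNReal.toReal_ofReal (by linarith)]
    rw [min_eq_left (le_trans h1 ht), max_eq_left h1, smul_eq_mul, mul_one]
  · rcases le_or_gt c u with h2 | h2
    · have : Set.Ici c ∩ Set.Ioc t u = Set.Icc c u := by
        ext τ; constructor
        · rintro ⟨ha, _, hb⟩; exact ⟨ha, hb⟩
        · rintro ⟨ha, hb⟩; exact ⟨ha, lt_of_lt_of_le h1 ha, hb⟩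
      rw [this, Real.volume_Icc, ENNReal.toReal_ofReal (by linarith)]
      rw [min_eq_left h2, max_eq_right h1.le, smul_eq_mul, mul_one]
    · have : Set.Ici c ∩ Set.Ioc t u = ∅ := by
        ext τ; simp only [Set.mem_inter_iff, Set.mem_Ici, Set.mem_Ioc, Set.mem_empty_iff_false,
          iff_false, not_and]
        intro ha _ ; linarith
      rw [this]
      rw [min_eq_right h2.le, max_eq_right ht]
      simp

lemma cdf_expand (v : Fin 2 → ℝ) (t : ℝ) :
    cdf19 2 (fun _ => (1:ℝ)/2) v t
      = (if v 0 ≤ t then (1:ℝ)/2 else 0) + (if v 1 ≤ t then (1:ℝ)/2 else 0) := by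
  rw [cdf19, Finset.sum_filter, Fin.sum_univ_two]

lemma hinteg (t : ℝ) (ht : t ∈ Set.Icc (0:ℝ) 3) :
    ∫ τ in t..3, (cdf19 2 (fun _ => (1:ℝ)/2) ![1,2] τ - cdf19 2 (fun _ => (1:ℝ)/2) ![0,3] τ)
      = (1/2)*((3 - max t 1) + (3 - max t 2) - (3 - t) - 0) := by
  have heq : ∀ τ : ℝ, cdf19 2 (fun _ => (1:ℝ)/2) ![1,2] τ - cdf19 2 (fun _ => (1:ℝ)/2) ![0,3] τ
      = (1/2)*((if (1:ℝ) ≤ τ then (1:ℝ) else 0) + (if (2:ℝ) ≤ τ then (1:ℝ) else 0)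
        - ((if (0:ℝ) ≤ τ then (1:ℝ) else 0) + (if (3:ℝ) ≤ τ then (1:ℝ) else 0))) := by
    intro τ
    rw [cdf_expand, cdf_expand]
    simp only [Matrix.cons_val_zero, Matrix.cons_val_one, Matrix.head_cons]
    by_cases h1 : (1:ℝ) ≤ τ <;> by_cases h2 : (2:ℝ) ≤ τ <;> by_cases h0 : (0:ℝ) ≤ τ <;>
      by_cases h3 : (3:ℝ) ≤ τ <;> simp [h0, h1, h2, h3] <;> norm_num
  simp_rw [heq]
  rw [intervalIntegral.integral_const_mul,
      intervalIntegral.integral_sub ((step_ii 1 t 3).add (step_ii 2 t 3))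
        ((step_ii 0 t 3).add (step_ii 3 t 3)),
      intervalIntegral.integral_add (step_ii 1 t 3) (step_ii 2 t 3),
      intervalIntegral.integral_add (step_ii 0 t 3) (step_ii 3 t 3),
      step_int 1 t 3 ht.2, step_int 2 t 3 ht.2, step_int 0 t 3 ht.2, step_int 3 t 3 ht.2]
  rw [min_self, max_eq_right ht.2]
  rw [show min (0:ℝ) 3 = 0 by norm_num, show min (1:ℝ) 3 = 1 by norm_num,
      show min (2:ℝ) 3 = 2 by norm_num, max_eq_left ht.1]
  ring

/-- MWSD implies MSD; but the converse fails: there are discrete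
random variables X, Y on a two-point equiprobable state space with X ⪰ Y (MSD)
but not X ⪰₀⁰ Y (MWSD with d⁻ = d⁺ = 0). -/
theorem stmt_19 :
    (∀ (n : ℕ) (p x y : Fin n → ℝ) (a b r dm dp : ℝ),
        dm ∈ Set.Icc (0:ℝ) 1 → dp ∈ Set.Icc (0:ℝ) 1 →
        MWSD19 n p a b r x y dm dp → MSD19 n p a b r x y) ∧
    (∃ (x y : Fin 2 → ℝ) (a b r : ℝ),
        (∀ i, x i ∈ Set.Icc a b) ∧ (∀ i, y i ∈ Set.Icc a b) ∧ r ∈ Set.Icc a b ∧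
        MSD19 2 (fun _ => (1:ℝ)/2) a b r x y ∧
        ¬ MWSD19 2 (fun _ => (1:ℝ)/2) a b r x y 0 0) := by
  constructor
  · intro n p x y a b r dm dp _ _ h
    exact h.1
  · refine ⟨![0,3], ![1,2], 0, 3, 0, ?_, ?_, ?_, ?_, ?_⟩
    · intro i; fin_cases i <;> constructor <;> norm_num
    · intro i; fin_cases i <;> constructor <;> norm_num
    · constructor <;> norm_num
    · -- MSD holds
      constructor
      · intro t ht
        rw [hinteg t ht]
        rcases le_total t 1 with h1 | h1
        · rw [max_eq_right h1, max_eq_right (by linarith : t ≤ 2)]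
          nlinarith [ht.1]
        · rcases le_total t 2 with h2 | h2
          · rw [max_eq_left h1, max_eq_right h2]; nlinarith
          · rw [max_eq_left h1, max_eq_left h2]; nlinarith [ht.2]
      · intro t ht
        have : t = 0 := le_antisymm ht.2 ht.1
        subst this
        simp [intervalIntegral.integral_same]
    · -- MWSD fails
      rintro ⟨-, hfsd⟩
      have hxval : cdf19 2 (fun _ => (1:ℝ)/2) ![0,3] (1/2) = 1/2 := by
        rw [cdf_expand]; norm_num
      have hyval : cdf19 2 (fun _ => (1:ℝ)/2) ![1,2] (1/2) = 0 := by
        rw [cdf_expand]; norm_num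
      have hmem : (1/2 : ℝ) ∈ Set.Ico (tdm19 2 (fun _ => (1:ℝ)/2) ![0,3] ![1,2] 0 0 0)
          (tdp19 2 (fun _ => (1:ℝ)/2) ![0,3] ![1,2] 3 0 0) := by
        constructor
        · -- tdm ≤ 1/2
          unfold tdm19
          refine csSup_le ⟨0, Set.mem_union_left _ rfl⟩ ?_
          rintro z (hz | hz)
          · rw [Set.mem_singleton_iff] at hz; rw [hz]; norm_num
          · exact le_trans hz.1 (by norm_num)
        · -- 1/2 < tdp
          have h2 : (3:ℝ) ≤ tdp19 2 (fun _ => (1:ℝ)/2) ![0,3] ![1,2] 3 0 0 := by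
            unfold tdp19
            refine le_csInf ⟨3, Set.mem_union_left _ rfl⟩ ?_
            rintro z (hz | hz)
            · rw [Set.mem_singleton_iff] at hz; rw [hz]
            · rcases hz with ⟨_, hx, _⟩
              rw [cdf_expand] at hx
              simp only [Matrix.cons_val_zero, Matrix.cons_val_one, Matrix.head_cons] at hx
              by_contra hc
              push_neg at hc
              have h3 : ¬ (3:ℝ) ≤ z := not_le.mpr hc
              simp only [h3, if_false] at hx
              by_cases h0 : (0:ℝ) ≤ z <;> simp only [h0, if_true, if_false] at hx <;> linarith
          linarith
      have := hfsd _ hmem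
      rw [hxval, hyval] at this
      linarith
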